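/- Let A be a domain in which every monic polynomial with coefficients in A splits into a product of monic linear factors (equivalently, every monic polynomial over A has a root in A), and let 𝔮 be a prime ideal of A. Then every monic polynomial with coefficients in the quotient domain A/𝔮 splits into a product of monic linear factors over A/𝔮; consequently the fraction field of A/𝔮 is algebraically closed. -/

import Mathlib

open Polynomial

/-- In a nontrivial commutative ring where every monic polynomial of positive degree has a
root, every monic polynomial is a product of monic linear factors. -/
lemma monic_eq_prod_linear_aux {B : Type*} [CommRing B] [Nontrivial B]
    (hB : ∀ P : Polynomial B, P.Monic → 0 < P.degree → ∃ a : B, P.IsRoot a) :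
    ∀ (n : ℕ) (q : Polynomial B), q.natDegree = n → q.Monic →
      ∃ s : Multiset B, q = (s.map fun a => X - C a).prod := by
  intro n
  induction n using Nat.strong_induction_on with
  | _ n ih =>
    intro q hdeg hq
    rcases Nat.eq_zero_or_pos n with h0 | hpos
    · subst h0
      have : q = 1 := hq.natDegree_eq_zero.mp hdeg
      exact ⟨0, by simp [this]⟩
    · have hdpos : 0 < q.degree := by
        rw [← natDegree_pos_iff_degree_pos]; omega
      obtain ⟨a, ha⟩ := hB q hq hdpos
      obtain ⟨q', hq'⟩ := (dvd_iff_isRoot.mpr ha)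
      have hmonlin : (X - C a).Monic := monic_X_sub_C a
      have hq'monic : q'.Monic := hmonlin.of_mul_monic_left (hq' ▸ hq)
      have hdeg' : q'.natDegree = n - 1 := by
        have : q.natDegree = (X - C a).natDegree + q'.natDegree := by
          rw [hq', hmonlin.natDegree_mul hq'monic]
        rw [natDegree_X_sub_C] at this
        omega
      obtain ⟨s, hs⟩ := ih (n - 1) (by omega) q' hdeg' hq'monic
      exact ⟨a ::ₘ s, by rw [hq', hs]; simp⟩

/-- Quotients of absolutely integrally closed domains by prime ideals are absolutely
integrally closed; consequently the fraction field of the quotient is algebraically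
closed. -/
theorem quotient_of_absolutely_integrally_closed
    (A : Type) [CommRing A] [IsDomain A]
    (hA : ∀ P : Polynomial A, P.Monic → 0 < P.degree → ∃ a : A, P.IsRoot a)
    (𝔮 : Ideal A) [𝔮.IsPrime] :
    (∀ P : Polynomial (A ⧸ 𝔮), P.Monic → 0 < P.degree → ∃ a : A ⧸ 𝔮, P.IsRoot a) ∧
      IsAlgClosed (FractionRing (A ⧸ 𝔮)) := by
  set f : A →+* A ⧸ 𝔮 := Ideal.Quotient.mk 𝔮 with hf
  have hB : ∀ P : Polynomial (A ⧸ 𝔮), P.Monic → 0 < P.degree → ∃ a : A ⧸ 𝔮, P.IsRoot a := by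
    intro P hP hPdeg
    have hsurj : Function.Surjective f := Ideal.Quotient.mk_surjective
    obtain ⟨Q₀, hQ₀⟩ := Polynomial.map_surjective f hsurj P
    have hlifts : P ∈ Polynomial.lifts f := ⟨Q₀, hQ₀⟩
    obtain ⟨Q, hQmap, hQdeg, hQmonic⟩ := Polynomial.lifts_and_degree_eq_and_monic hlifts hP
    obtain ⟨a, ha⟩ := hA Q hQmonic (by rw [hQdeg]; exact hPdeg)
    refine ⟨f a, ?_⟩
    have : P.eval (f a) = f (Q.eval a) := by
      rw [← hQmap, eval_map, eval₂_hom]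
    rw [Polynomial.IsRoot, this, ha.eq_zero, map_zero]
  refine ⟨hB, ?_⟩
  set B := A ⧸ 𝔮
  set K := FractionRing B
  set L := AlgebraicClosure K
  apply IsAlgClosed.of_exists_root
  intro p pmonic pirr
  obtain ⟨x, hx⟩ := IsAlgClosed.exists_root (p.map (algebraMap K L))
    (by rw [degree_map_eq_of_injective (algebraMap K L).injective]
        exact (degree_pos_of_irreducible pirr).ne')
  have hxalgK : IsAlgebraic K x := by
    refine ⟨p, pmonic.ne_zero, ?_⟩
    rwa [Polynomial.aeval_def, ← eval_map]
  have hxalgB : IsAlgebraic B x := (IsFractionRing.isAlgebraic_iff B K L).mpr hxalgK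
  have hinj : ∀ b : B, algebraMap B L b = 0 → b = 0 := by
    intro b hb
    rw [IsScalarTower.algebraMap_apply B K L] at hb
    exact IsFractionRing.to_map_eq_zero_iff.mp ((algebraMap K L).injective (by simpa using hb))
  obtain ⟨⟨y, hyint⟩, d, hd0, hdy⟩ :
      ∃ᵉ (y : integralClosure B L) (d ≠ (0 : B)), algebraMap B L d * x = y := by
    obtain ⟨d, hd0, hint⟩ := hxalgB.exists_integral_multiple
    exact ⟨⟨d • x, hint⟩, d, hd0, (Algebra.smul_def d x).symm⟩
  obtain ⟨q, qmonic, hq⟩ := hyint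
  obtain ⟨s, hs⟩ := monic_eq_prod_linear_aux hB q.natDegree q rfl qmonic
  have heval : ∃ b ∈ s, y - algebraMap B L b = 0 := by
    have h2 : ((q.map (algebraMap B L)).eval y) = 0 := by rwa [eval_map]
    rw [hs, Polynomial.map_multiset_prod] at h2
    simp [eval_multiset_prod, Multiset.map_map, Function.comp] at h2
    obtain ⟨b, hb, h⟩ := Multiset.mem_map.mp (Multiset.prod_eq_zero_iff.mp h2)
    exact ⟨b, hb, h⟩
  obtain ⟨b, hb, hz0⟩ := heval
  have hyb : y = algebraMap B L b := sub_eq_zero.mp hz0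
  set k : K := algebraMap B K b / algebraMap B K d with hk
  have hdK : algebraMap B K d ≠ 0 := fun h => hd0 (IsFractionRing.to_map_eq_zero_iff.mp h)
  have hdL : algebraMap K L (algebraMap B K d) ≠ 0 := fun h =>
    hdK ((algebraMap K L).injective (by simpa using h))
  have h1 : algebraMap K L (algebraMap B K d) * x = algebraMap K L (algebraMap B K b) := by
    rw [← IsScalarTower.algebraMap_apply B K L, ← IsScalarTower.algebraMap_apply B K L]
    rw [hdy]
    exact hyb
  have hxk : algebraMap K L k = x := by
    rw [hk, map_div₀, div_eq_iff hdL, mul_comm]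
    exact h1.symm
  refine ⟨k, ?_⟩
  have : algebraMap K L (p.eval k) = 0 := by
    rw [← eval₂_hom, ← eval_map, hxk]
    exact hx
  exact (map_eq_zero_iff _ (algebraMap K L).injective).mp this
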